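/- Let S be an infinite type and let σ : S × S → S be a total associative binary operation. Then there is no constant k such that σ is k-to-one; that is, for every k ∈ ℕ there exists z in the image of σ whose preimage under σ has more than k elements. -/

import Mathlib

namespace TotAssocAux

variable {S : Type*} (σ : S → S → S)

/-- `pw σ a n` is `a^(n+1)` with respect to `σ`. -/
def pw (a : S) : ℕ → S
  | 0 => a
  | n+1 => σ a (pw a n)

lemma pw_succ (a : S) (n : ℕ) : pw σ a (n+1) = σ a (pw σ a n) := rfl

lemma pw_add (hassoc : ∀ a b c : S, σ (σ a b) c = σ a (σ b c)) (a : S) (m n : ℕ) : σ (pw σ a m) (pw σ a n) = pw σ a (m + n + 1) := by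
  induction m with
  | zero =>
    show σ a (pw σ a n) = pw σ a (0 + n + 1)
    rw [Nat.zero_add]
    rfl
  | succ m ih =>
    rw [pw_succ, hassoc, ih]
    have h : m + 1 + n + 1 = (m + n + 1) + 1 := by omega
    rw [h]
    rfl

lemma pw_shift (a : S) {i j : ℕ} (hij : pw σ a i = pw σ a j) (m : ℕ) :
    pw σ a (i + m) = pw σ a (j + m) := by
  induction m with
  | zero => simpa using hij
  | succ m ih =>
    have h1 : i + (m + 1) = (i + m) + 1 := by omega
    have h2 : j + (m + 1) = (j + m) + 1 := by omega
    rw [h1, h2, pw_succ, pw_succ, ih]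

lemma pw_period (hassoc : ∀ a b c : S, σ (σ a b) c = σ a (σ b c)) (a : S) {i d : ℕ} (hd : pw σ a i = pw σ a (i + d)) (m t : ℕ) :
    pw σ a (i + m + t * d) = pw σ a (i + m) := by
  induction t with
  | zero => simp
  | succ t ih =>
    have h1 : i + m + (t + 1) * d = (i + d) + (m + t * d) := by ring
    rw [h1]
    have h2 := (pw_shift σ a hd (m + t * d)).symm
    rw [h2]
    have h3 : i + (m + t * d) = i + m + t * d := by ring
    rw [h3, ih]

/-- The chain construction: infinitely many idempotents give arbitrarily large fibers. -/
lemma chain (hassoc : ∀ a b c : S, σ (σ a b) c = σ a (σ b c)) [Infinite S] (k : ℕ) (E : Set S) (hE : E.Infinite) (hid : ∀ e ∈ E, σ e e = e) :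
    ∃ z : S, (∃ p : S × S, σ p.1 p.2 = z) ∧
      ∃ T : Finset (S × S), (∀ p ∈ T, σ p.1 p.2 = z) ∧ k < T.card := by
  classical
  have main : ∀ n : ℕ,
      (∃ z : S, (∃ p : S × S, σ p.1 p.2 = z) ∧
        ∃ T : Finset (S × S), (∀ p ∈ T, σ p.1 p.2 = z) ∧ k < T.card) ∨
      ∃ (p : S) (T : Finset (S × S)),
        (∀ q ∈ T, σ q.1 q.2 = p) ∧ n ≤ (T.image Prod.fst).card := by
    intro n
    induction n with
    | zero =>
      right
      obtain ⟨e, _⟩ := hE.nonempty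
      exact ⟨e, ∅, by simp, by simp⟩
    | succ n ih =>
      rcases ih with h | ⟨p, T, hT, hcard⟩
      · exact Or.inl h
      by_cases hstep : ∃ e ∈ E, σ p e ∉ T.image Prod.fst
      · obtain ⟨e, heE, hnot⟩ := hstep
        right
        refine ⟨σ p e, insert (σ p e, e) (T.image (fun q => (q.1, σ q.2 e))), ?_, ?_⟩
        · intro q hq
          rcases Finset.mem_insert.mp hq with h | h
          · rw [h]
            show σ (σ p e) e = σ p e
            rw [hassoc, hid e heE]
          · obtain ⟨r, hr, rfl⟩ := Finset.mem_image.mp h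
            show σ r.1 (σ r.2 e) = σ p e
            rw [← hassoc, hT r hr]
        · have himg : (T.image (fun q => (q.1, σ q.2 e))).image Prod.fst
              = T.image Prod.fst := by
            rw [Finset.image_image]
            rfl
          rw [Finset.image_insert, himg]
          rw [Finset.card_insert_of_notMem hnot]
          omega
      · push_neg at hstep
        left
        have hvex : ∃ v ∈ T.image Prod.fst, {e ∈ E | σ p e = v}.Infinite := by
          by_contra hfin
          push_neg at hfin
          have hsub : E ⊆ ⋃ v ∈ (T.image Prod.fst : Finset S), {e ∈ E | σ p e = v} := by
            intro e he
            exact Set.mem_biUnion (hstep e he) ⟨he, rfl⟩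
          exact hE ((Set.Finite.biUnion (T.image Prod.fst).finite_toSet
            (fun v hv => (hfin v hv))).subset hsub)
        obtain ⟨v, _, hinf⟩ := hvex
        obtain ⟨Y, hYsub, hYcard⟩ := hinf.exists_subset_card_eq (k + 1)
        have hYne : Y.Nonempty := Finset.card_pos.mp (by omega)
        obtain ⟨e0, he0⟩ := hYne
        refine ⟨v, ⟨(p, e0), (hYsub he0).2⟩,
          Y.image (fun e => (p, e)), ?_, ?_⟩
        · intro q hq
          obtain ⟨e, he, rfl⟩ := Finset.mem_image.mp hq
          exact (hYsub he).2
        · rw [Finset.card_image_of_injective _ (fun a b h => (Prod.ext_iff.mp h).2)]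
          omega
  rcases main (k + 1) with h | ⟨p, T, hT, hcard⟩
  · exact h
  · have h1 : k + 1 ≤ T.card := hcard.trans Finset.card_image_le
    have hne : T.Nonempty := Finset.card_pos.mp (by omega)
    obtain ⟨q, hq⟩ := hne
    exact ⟨p, ⟨q, hT q hq⟩, T, hT, by omega⟩

end TotAssocAux

open TotAssocAux in
theorem total_associative_not_constant_to_one
    {S : Type*} [Infinite S] (σ : S → S → S)
    (hassoc : ∀ a b c : S, σ (σ a b) c = σ a (σ b c)) :
    ∀ k : ℕ, ∃ z : S, (∃ p : S × S, σ p.1 p.2 = z) ∧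
      ∃ T : Finset (S × S), (∀ p ∈ T, σ p.1 p.2 = z) ∧ k < T.card := by
  classical
  intro k
  by_cases hA : ∃ a : S, ∀ i ≤ k, ∀ j ≤ k, pw σ a i = pw σ a j → i = j
  · -- Case A: an element with k+1 distinct small powers
    obtain ⟨a, ha⟩ := hA
    refine ⟨pw σ a (k + 1), ⟨(pw σ a 0, pw σ a k), ?_⟩,
      (Finset.range (k + 1)).image (fun i => (pw σ a i, pw σ a (k - i))), ?_, ?_⟩
    · show σ (pw σ a 0) (pw σ a k) = pw σ a (k + 1)
      rw [pw_add σ hassoc]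
      congr 1
      omega
    · intro q hq
      obtain ⟨i, hi, rfl⟩ := Finset.mem_image.mp hq
      rw [Finset.mem_range] at hi
      show σ (pw σ a i) (pw σ a (k - i)) = pw σ a (k + 1)
      rw [pw_add σ hassoc]
      congr 1
      omega
    · rw [Finset.card_image_of_injOn]
      · simp
      · intro i hi j hj hij
        rw [Finset.mem_coe, Finset.mem_range] at hi hj
        have : pw σ a i = pw σ a j := congrArg Prod.fst hij
        exact ha i (by omega) j (by omega) this
  · -- Case B: every element has a power collision among the first k+1 powers
    push_neg at hA
    have hB : ∀ a : S, ∃ i d : ℕ, i + d ≤ k ∧ 0 < d ∧ pw σ a i = pw σ a (i + d) := by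
      intro a
      obtain ⟨i, hi, j, hj, heq, hne⟩ := hA a
      rcases Nat.lt_or_ge i j with h | h
      · exact ⟨i, j - i, by omega, by omega, by rw [show i + (j - i) = j by omega]; exact heq⟩
      · have h' : j < i := by omega
        exact ⟨j, i - j, by omega, by omega, by rw [show j + (i - j) = i by omega]; exact heq.symm⟩
    have hk1 : 1 ≤ k := by
      obtain ⟨i, d, h1, h2, _⟩ := hB (Classical.arbitrary S)
      omega
    set K := 2 * Nat.factorial k with hK
    have hK2 : 2 ≤ K := by
      have := Nat.one_le_iff_ne_zero.mpr (Nat.factorial_ne_zero k)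
      omega
    -- every pw a (K-1)  (i.e. a^K) is idempotent
    have hidem : ∀ a : S, σ (pw σ a (K - 1)) (pw σ a (K - 1)) = pw σ a (K - 1) := by
      intro a
      obtain ⟨i, d, hidk, hd, heq⟩ := hB a
      rw [pw_add σ hassoc]
      have hdvd : d ∣ Nat.factorial k := Nat.dvd_factorial hd (by omega)
      have hdvd2 : d ∣ K := hK ▸ Dvd.dvd.mul_left hdvd 2
      obtain ⟨t, ht⟩ := hdvd2
      have hik : i ≤ K - 1 := by
        have hkf : k ≤ Nat.factorial k := Nat.self_le_factorial k
        omega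
      have h1 : K - 1 + (K - 1) + 1 = i + (K - 1 - i) + t * d := by
        have : t * d = d * t := by ring
        omega
      have h2 : K - 1 = i + (K - 1 - i) := by omega
      rw [h1, pw_period σ hassoc a heq, ← h2]
    by_cases hR : (Set.range (fun a : S => pw σ a (K - 1))).Finite
    · -- B1: x ↦ x^K has finite range, so some fiber is infinite
      have hvex : ∃ v : S, {a : S | pw σ a (K - 1) = v}.Infinite := by
        by_contra hfin
        push_neg at hfin
        have hsub : (Set.univ : Set S) ⊆
            ⋃ v ∈ Set.range (fun a : S => pw σ a (K - 1)), {a : S | pw σ a (K - 1) = v} := by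
          intro a _
          exact Set.mem_biUnion ⟨a, rfl⟩ rfl
        exact Set.infinite_univ ((hR.biUnion
          (fun v _ => (hfin v))).subset hsub)
      obtain ⟨v, hinf⟩ := hvex
      obtain ⟨X, hXsub, hXcard⟩ := hinf.exists_subset_card_eq (k + 1)
      have hXne : X.Nonempty := Finset.card_pos.mp (by omega)
      obtain ⟨x0, hx0⟩ := hXne
      have hmap : ∀ x ∈ X, σ x (pw σ x (K - 2)) = v := by
        intro x hx
        have : σ x (pw σ x (K - 2)) = pw σ x (K - 2 + 1) := rfl
        rw [this, show K - 2 + 1 = K - 1 by omega]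
        exact hXsub hx
      refine ⟨v, ⟨(x0, pw σ x0 (K - 2)), hmap x0 hx0⟩,
        X.image (fun x => (x, pw σ x (K - 2))), ?_, ?_⟩
      · intro q hq
        obtain ⟨x, hx, rfl⟩ := Finset.mem_image.mp hq
        exact hmap x hx
      · rw [Finset.card_image_of_injective _ (fun a b h => (Prod.ext_iff.mp h).1)]
        omega
    · -- B2: infinitely many idempotents
      refine chain σ hassoc k (Set.range (fun a : S => pw σ a (K - 1))) hR ?_
      rintro e ⟨a, rfl⟩
      exact hidem a
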